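/- arXiv:2307.00247 — 4 statements merged into one kernel-verified Lean document; each statement's English description precedes it below -/
import Mathlib

section
/- For y > 0 and ε ≥ 0, the supremum over t ≥ 0 of θt − [(t+ε)·ln((t+ε)/y) − (t+ε) + y] equals y·e^θ − y − εθ whenever e^θ·y ≥ ε (i.e., the maximizer t* = y e^θ − ε is nonnegative). -/
theorem kl_scalar_conjugate (y ε θ : ℝ) (hy : 0 < y) (hε : 0 ≤ ε)
    (hfeas : ε ≤ y * Real.exp θ) :
    IsLUB {s : ℝ | ∃ t : ℝ, 0 ≤ t ∧
        s = θ * t - ((t + ε) * Real.log ((t + ε) / y) - (t + ε) + y)}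
      (y * Real.exp θ - y - ε * θ) := by
  have hb : 0 < y * Real.exp θ := mul_pos hy (Real.exp_pos θ)
  have hlogb : Real.log (y * Real.exp θ) = Real.log y + θ := by
    rw [Real.log_mul (ne_of_gt hy) (ne_of_gt (Real.exp_pos θ)), Real.log_exp]
  constructor
  · rintro s ⟨t, ht, rfl⟩
    set a := t + ε with ha_def
    have ha : 0 ≤ a := add_nonneg ht hε
    rcases eq_or_lt_of_le ha with h0 | h0
    · have ht0 : t = 0 := by linarith [hε, ht]
      have hε0 : ε = 0 := by linarith
      have ha0 : a = 0 := h0.symm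
      rw [ht0, hε0, ha0]
      simp [Real.log_zero]
      nlinarith [Real.exp_pos θ]
    · have hkey : Real.log ((y * Real.exp θ) / a) ≤ (y * Real.exp θ) / a - 1 :=
        Real.log_le_sub_one_of_pos (div_pos hb h0)
      have h1 : a * Real.log ((y * Real.exp θ) / a) ≤ y * Real.exp θ - a := by
        have := mul_le_mul_of_nonneg_left hkey (le_of_lt h0)
        calc a * Real.log ((y * Real.exp θ) / a) ≤ a * ((y * Real.exp θ) / a - 1) := this
          _ = y * Real.exp θ - a := by field_simp
      have h2 : Real.log ((y * Real.exp θ) / a) = Real.log y + θ - Real.log a := by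
        rw [Real.log_div (ne_of_gt hb) (ne_of_gt h0), hlogb]
      have h3 : Real.log (a / y) = Real.log a - Real.log y := by
        rw [Real.log_div (ne_of_gt h0) (ne_of_gt hy)]
      rw [h2] at h1
      rw [h3]
      have hta : θ * t = θ * a - θ * ε := by
        have : t = a - ε := by rw [ha_def]; ring
        rw [this]; ring
      nlinarith [h1, hta]
  · intro u hu
    have hmem : (y * Real.exp θ - y - ε * θ) ∈ {s : ℝ | ∃ t : ℝ, 0 ≤ t ∧
        s = θ * t - ((t + ε) * Real.log ((t + ε) / y) - (t + ε) + y)} := by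
      refine ⟨y * Real.exp θ - ε, by linarith, ?_⟩
      have h4 : (y * Real.exp θ - ε) + ε = y * Real.exp θ := by ring
      rw [h4]
      have h5 : Real.log ((y * Real.exp θ) / y) = θ := by
        rw [Real.log_div (ne_of_gt hb) (ne_of_gt hy), hlogb]; ring
      rw [h5]; ring
    exact hu hmem
end

section
/- Shifting Projection feasibility: Given α ∈ ℝ^m, β ∈ ℝ^n, λ > 0 and a cost matrix C ∈ ℝ^{m×n}, define α̃_u = α_u − max_{j} (α_u + β_j − λC_{u,j})/2 and β̃_v = β_v − max_{i} (α_i + β_v − λC_{i,v})/2 (maxima taken over nonempty finite index sets). Then for all u ∈ [m] and v ∈ [n], α̃_u + β̃_v ≤ λ C_{u,v}. -/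
theorem shifting_projection_feasible (m n : ℕ) [NeZero m] [NeZero n]
    (α : Fin m → ℝ) (β : Fin n → ℝ) (C : Fin m → Fin n → ℝ) (lam : ℝ)
    (hlam : 0 < lam) :
    ∀ (u : Fin m) (v : Fin n),
      (α u - Finset.univ.sup' Finset.univ_nonempty
          (fun j : Fin n => (α u + β j - lam * C u j) / 2)) +
      (β v - Finset.univ.sup' Finset.univ_nonempty
          (fun i : Fin m => (α i + β v - lam * C i v) / 2)) ≤ lam * C u v := by
  intro u v
  have h1 : (α u + β v - lam * C u v) / 2 ≤
      Finset.univ.sup' Finset.univ_nonempty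
        (fun j : Fin n => (α u + β j - lam * C u j) / 2) :=
    Finset.le_sup' (fun j : Fin n => (α u + β j - lam * C u j) / 2) (Finset.mem_univ v)
  have h2 : (α u + β v - lam * C u v) / 2 ≤
      Finset.univ.sup' Finset.univ_nonempty
        (fun i : Fin m => (α i + β v - lam * C i v) / 2) :=
    Finset.le_sup' (fun i : Fin m => (α i + β v - lam * C i v) / 2) (Finset.mem_univ u)
  linarith
end

section
/- Gap-safe ball: under the hypotheses that the dual D is L-strongly concave on a convex set G containing both θ̂ (the maximizer of D over G, with first-order optimality ⟨∇D(θ̂), θ − θ̂⟩ ≤ 0 for θ ∈ G) and a feasible point θ̃ ∈ G, one has ‖θ̂ − θ̃‖₂² ≤ (2/L)·Gap(t, θ̃) for any primal-feasible t, where Gap(t, θ̃) = P(t) − D(θ̃) and P(t) ≥ D(θ̂). -/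
open RealInnerProductSpace

theorem gap_safe_ball {d : ℕ}
    (D : EuclideanSpace ℝ (Fin d) → ℝ) (L : ℝ) (hL : 0 < L)
    (hdiff : Differentiable ℝ D)
    (G : Set (EuclideanSpace ℝ (Fin d))) (hG : Convex ℝ G)
    (hconc : ∀ x ∈ G, ∀ y ∈ G,
      D y ≤ D x + ⟪gradient D x, y - x⟫ - L / 2 * ‖y - x‖ ^ 2)
    (θhat : EuclideanSpace ℝ (Fin d)) (hθhatG : θhat ∈ G)
    (hmax : ∀ θ ∈ G, D θ ≤ D θhat)
    (hfoc : ∀ θ ∈ G, ⟪gradient D θhat, θ - θhat⟫ ≤ 0)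
    (θtil : EuclideanSpace ℝ (Fin d)) (hθtilG : θtil ∈ G)
    (Pt : ℝ) (hPt : D θhat ≤ Pt) :
    ‖θhat - θtil‖ ^ 2 ≤ 2 / L * (Pt - D θtil) := by
  have h1 := hconc θhat hθhatG θtil hθtilG
  have h2 := hfoc θtil hθtilG
  have hn : ‖θhat - θtil‖ = ‖θtil - θhat‖ := by rw [norm_sub_rev]
  rw [hn]
  rw [div_mul_eq_mul_div, le_div_iff₀ hL]
  nlinarith [sq_nonneg ‖θtil - θhat‖]
end

section
/- Maximum of a linear functional over the intersection of a ball and a half-space (dome): let B = {θ : ‖θ − θ₀‖ ≤ r} and H = {θ : wᵀθ ≤ e} with w ≠ 0, and suppose B ∩ H is nonempty. For x ∈ ℝ^d, if the unconstrained ball maximizer θ₀ + r·x/‖x‖ lies in H, then max over B ∩ H of xᵀθ equals xᵀθ₀ + r‖x‖; otherwise the maximum equals xᵀθ₀ + (e − wᵀθ₀)·(xᵀw)/‖w‖² + √(r² − (e − wᵀθ₀)²/‖w‖²) · √(‖x‖² − (xᵀw)²/‖w‖²), provided |e − wᵀθ₀| ≤ r‖w‖. -/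
set_option maxHeartbeats 1000000

open RealInnerProductSpace


lemma dome_step1 (a c m s r W L : ℝ) (hW : 0 < W) (hr : 0 < r) (hm : 0 ≤ m) (hL : 0 ≤ L)
    (hm2 : m^2 = L^2 - a^2*W^2) (hs2 : s^2*W^2 = r^2*W^2 - c^2) (hs : 0 ≤ s)
    (hcase : c*L < a*r*W^2) : c*m ≤ a*W^2*s := by
  have hid : (a*W^2*s)^2 - (c*m)^2 = (a*r*W^2)^2 - (c*L)^2 := by
    linear_combination a^2*W^2*hs2 - c^2*hm2
  rcases lt_or_ge 0 (c*m) with hB | hB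
  · have hm0 : 0 < m := by
      rcases hm.lt_or_eq with h | h
      · exact h
      · exact absurd hB (by rw [← h, mul_zero]; exact lt_irrefl 0)
    have hc0 : 0 < c := by
      rcases lt_or_ge 0 c with h | h
      · exact h
      · exact absurd hB (not_lt.mpr (mul_nonpos_iff.mpr (Or.inr ⟨h, hm⟩)))
    have hL0 : 0 < L := by nlinarith [sq_nonneg (a*W), hm0, hm2]
    have hQ : 0 < c*L := mul_pos hc0 hL0
    have hP : 0 < a*r*W^2 := hQ.trans hcase
    have ha : 0 < a := by
      rcases lt_or_ge 0 a with h | h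
      · exact h
      · exfalso
        have h2 : a*(r*W^2) ≤ 0 := mul_nonpos_iff.mpr (Or.inr ⟨h, by positivity⟩)
        nlinarith [h2, hP]
    have hA : 0 ≤ a*W^2*s := by positivity
    nlinarith [mul_pos (sub_pos.mpr hcase) (add_pos hP hQ), hid, hA, hB]
  · rcases le_or_gt 0 (a*W^2*s) with hA | hA
    · linarith
    · have hPQ : 0 < a*r*W^2 - c*L := sub_pos.mpr hcase
      have ha : a < 0 := by
        rcases lt_or_ge a 0 with h | h
        · exact h
        · exact absurd hA (not_lt.mpr (mul_nonneg (mul_nonneg h (by positivity)) hs))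
      have hP : a*r*W^2 < 0 := by
        have := mul_neg_of_neg_of_pos ha (by positivity : (0:ℝ) < r*W^2)
        nlinarith [this]
      have hQ : c*L < 0 := hcase.trans hP
      nlinarith [mul_pos hPQ (neg_pos.mpr (by linarith : a*r*W^2 + c*L < 0)), hid, hA, hB]

lemma dome_key (a c m n p s r W L : ℝ) (hW : 0 < W) (hr : 0 < r) (hm : 0 ≤ m) (hn : 0 ≤ n)
    (hL : 0 ≤ L) (hm2 : m^2 = L^2 - a^2*W^2) (hs2 : s^2*W^2 = r^2*W^2 - c^2) (hs : 0 ≤ s)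
    (hn2 : p^2 + n^2*W^2 ≤ r^2*W^2) (hpc : p ≤ c) (hcase : c*L < a*r*W^2) :
    a*p + m*n ≤ a*c + m*s := by
  have h1 : c*m ≤ a*W^2*s := dome_step1 a c m s r W L hW hr hm hL hm2 hs2 hs hcase
  rcases eq_or_lt_of_le hs with hs0 | hs0
  · -- s = 0
    rw [← hs0] at hs2 h1
    have hc2 : c^2 = r^2*W^2 := by nlinarith [hs2]
    simp only [mul_zero, zero_pow] at hs2 h1
    rcases eq_or_ne c (-(r*W)) with hc | hc
    · -- c = -rW, forces p = c, n = 0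
      have hprw : p^2 ≤ (r*W)^2 := by nlinarith [sq_nonneg (n*W)]
      have hple : -(r*W) ≤ p := by
        by_contra h
        push_neg at h
        have hrW : 0 < r*W := mul_pos hr hW
        nlinarith [hprw, mul_pos (by linarith : (0:ℝ) < -(r*W) - p)
          (by linarith : (0:ℝ) < r*W - p)]
      have hp : p = c := le_antisymm hpc (hc ▸ hple)
      have hn0 : n = 0 := by
        have h2 : n^2*W^2 ≤ 0 := by rw [hp, hc] at hn2; nlinarith [hn2]
        have h3 : n^2 ≤ 0 := by
          have := (mul_le_mul_iff_of_pos_right (by positivity : (0:ℝ) < W^2)).mp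
            (by linarith : n^2*W^2 ≤ 0*W^2)
          linarith
        have h4 : n^2 = 0 := le_antisymm h3 (sq_nonneg n)
        exact pow_eq_zero_iff (by norm_num) |>.mp h4
      rw [hp, hn0, ← hs0]
    · -- c = rW : contradiction with hcase
      exfalso
      have hc' : c = r*W := by
        have h0 : (c - r*W)*(c + r*W) = 0 := by linear_combination hc2
        rcases mul_eq_zero.mp h0 with h | h
        · linarith
        · exact absurd (by linarith) hc
      have hcpos : 0 < c := hc' ▸ mul_pos hr hW
      have hm0 : m = 0 := by
        rcases hm.lt_or_eq with h | h
        · exact absurd h1 (not_le.mpr (by simpa using mul_pos hcpos h))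
        · exact h.symm
      have hrW : 0 < r*W := mul_pos hr hW
      have hLaW : L < a*W := by
        by_contra h
        push_neg at h
        nlinarith [mul_le_mul_of_nonneg_right h hrW.le, hcase, hc']
      have haW : 0 < a*W := lt_of_le_of_lt hL hLaW
      nlinarith [hm2, hm0, mul_pos (by linarith : (0:ℝ) < a*W - L)
        (by linarith : (0:ℝ) < a*W + L)]
  · -- 0 < s : certificate
    have t1 : 0 ≤ (a*W^2*s - c*m)*(c - p) := mul_nonneg (by linarith) (by linarith)
    have t2 : 0 ≤ m*(W^2*(s-n)^2) := mul_nonneg hm (by positivity)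
    have t3 : 0 ≤ m*(s^2*W^2 + c^2 - n^2*W^2 - p^2) := mul_nonneg hm (by linarith)
    have t4 : 0 ≤ m*((p-c)^2) := mul_nonneg hm (sq_nonneg _)
    have hident : 2*s*W^2*((a*c + m*s) - (a*p + m*n)) =
        (a*W^2*s - c*m)*(c - p)*2 + m*(W^2*(s-n)^2) +
        m*(s^2*W^2 + c^2 - n^2*W^2 - p^2) + m*((p-c)^2) := by ring
    have cert : 0 ≤ 2*s*W^2*((a*c + m*s) - (a*p + m*n)) := by
      rw [hident]; linarith [t1, t2, t3, t4]
    by_contra h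
    push_neg at h
    have hK : 0 < 2*s*W^2 := by positivity
    linarith [mul_pos hK (sub_pos.mpr h), cert]


theorem linear_max_over_dome {d : ℕ}
    (θ0 w x : EuclideanSpace ℝ (Fin d)) (r e : ℝ)
    (hr : 0 < r) (hw : w ≠ 0) (hx : x ≠ 0)
    (hne : ({θ : EuclideanSpace ℝ (Fin d) | ‖θ - θ0‖ ≤ r} ∩
            {θ | ⟪w, θ⟫ ≤ e}).Nonempty) :
    ((⟪w, θ0 + (r / ‖x‖) • x⟫ ≤ e) →
      IsGreatest ((fun θ : EuclideanSpace ℝ (Fin d) => ⟪x, θ⟫) ''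
          ({θ | ‖θ - θ0‖ ≤ r} ∩ {θ | ⟪w, θ⟫ ≤ e}))
        (⟪x, θ0⟫ + r * ‖x‖)) ∧
    ((¬ (⟪w, θ0 + (r / ‖x‖) • x⟫ ≤ e)) → |e - ⟪w, θ0⟫| ≤ r * ‖w‖ →
      IsGreatest ((fun θ : EuclideanSpace ℝ (Fin d) => ⟪x, θ⟫) ''
          ({θ | ‖θ - θ0‖ ≤ r} ∩ {θ | ⟪w, θ⟫ ≤ e}))
        (⟪x, θ0⟫ + (e - ⟪w, θ0⟫) * ⟪x, w⟫ / ‖w‖ ^ 2 +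
          Real.sqrt (r ^ 2 - (e - ⟪w, θ0⟫) ^ 2 / ‖w‖ ^ 2) *
          Real.sqrt (‖x‖ ^ 2 - ⟪x, w⟫ ^ 2 / ‖w‖ ^ 2))) := by
  have hxn : 0 < ‖x‖ := norm_pos_iff.mpr hx
  have hW : 0 < ‖w‖ := norm_pos_iff.mpr hw
  have hxne : ‖x‖ ≠ 0 := ne_of_gt hxn
  have hWne : ‖w‖ ≠ 0 := ne_of_gt hW
  constructor
  · -- Case 1
    intro h1
    constructor
    · refine ⟨θ0 + (r/‖x‖) • x, ⟨?_, h1⟩, ?_⟩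
      · show ‖θ0 + (r/‖x‖) • x - θ0‖ ≤ r
        rw [add_sub_cancel_left, norm_smul, Real.norm_eq_abs, abs_of_pos (by positivity)]
        field_simp
        norm_num
      · show ⟪x, θ0 + (r/‖x‖) • x⟫ = ⟪x, θ0⟫ + r * ‖x‖
        rw [inner_add_right, real_inner_smul_right, real_inner_self_eq_norm_sq]
        field_simp
    · rintro v ⟨θ, ⟨hB, _⟩, rfl⟩
      simp only [Set.mem_setOf_eq] at hB
      have h2 : ⟪x, θ⟫ = ⟪x, θ0⟫ + ⟪x, θ - θ0⟫ := by
        rw [← inner_add_right, add_comm θ0, sub_add_cancel]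
      have h3 := real_inner_le_norm x (θ - θ0)
      have h4 : ‖x‖ * ‖θ - θ0‖ ≤ ‖x‖ * r := mul_le_mul_of_nonneg_left hB (norm_nonneg x)
      simp only []
      rw [h2]
      linarith [h3, h4]
  · -- Case 2
    intro hcase0 hcb
    set c : ℝ := e - ⟪w, θ0⟫ with hcdef
    set a : ℝ := ⟪x, w⟫ / ‖w‖^2 with hadef
    have haw : ⟪x, w⟫ = a * ‖w‖^2 := by rw [hadef]; field_simp
    set xp : EuclideanSpace ℝ (Fin d) := x - a • w with hxpdef
    have hxps : x = a • w + xp := by rw [hxpdef]; abel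
    have hwxp : ⟪w, xp⟫ = 0 := by
      rw [hxpdef, inner_sub_right, real_inner_smul_right, real_inner_self_eq_norm_sq,
        real_inner_comm x w, haw]
      ring
    set m : ℝ := ‖xp‖ with hmdef
    have hm : 0 ≤ m := norm_nonneg _
    have hxxp : ⟪x, xp⟫ = m^2 := by
      calc ⟪x, xp⟫ = ⟪a • w + xp, xp⟫ := by rw [← hxps]
        _ = a * ⟪w, xp⟫ + ⟪xp, xp⟫ := by rw [inner_add_left, real_inner_smul_left]
        _ = m^2 := by rw [hwxp, real_inner_self_eq_norm_sq]; ring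
    have hm2 : m^2 = ‖x‖^2 - a^2*‖w‖^2 := by
      have h := hxxp
      rw [hxpdef, inner_sub_right, real_inner_smul_right, real_inner_self_eq_norm_sq,
        haw] at h
      linarith [h]
    set s : ℝ := Real.sqrt (r^2 - c^2/‖w‖^2) with hsdef
    have hs : 0 ≤ s := Real.sqrt_nonneg _
    have hcsq : c^2 ≤ r^2*‖w‖^2 := by
      have h := pow_le_pow_left₀ (abs_nonneg c) hcb 2
      rw [sq_abs] at h
      linarith [h]
    have hssq : 0 ≤ r^2 - c^2/‖w‖^2 := by
      rw [sub_nonneg, div_le_iff₀ (by positivity)]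
      linarith
    have hs2 : s^2*‖w‖^2 = r^2*‖w‖^2 - c^2 := by
      rw [hsdef, Real.sq_sqrt hssq]
      field_simp
    have hcaseR : c*‖x‖ < a*r*‖w‖^2 := by
      push_neg at hcase0
      rw [inner_add_right, real_inner_smul_right] at hcase0
      have h5 : c < r/‖x‖ * ⟪w, x⟫ := by rw [hcdef]; linarith
      have h6 : c * ‖x‖ < (r/‖x‖ * ⟪w, x⟫) * ‖x‖ := mul_lt_mul_of_pos_right h5 hxn
      have h7 : (r/‖x‖ * ⟪w, x⟫) * ‖x‖ = a*r*‖w‖^2 := by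
        rw [real_inner_comm x w, haw]
        field_simp
      rw [h7] at h6
      exact h6
    -- rewrite the goal value
    have hmeq : Real.sqrt (‖x‖^2 - ⟪x, w⟫^2/‖w‖^2) = m := by
      have h : ‖x‖^2 - ⟪x, w⟫^2/‖w‖^2 = m^2 := by
        rw [haw, hm2]
        field_simp
      rw [h, Real.sqrt_sq hm]
    have hVeq : (⟪x, θ0⟫ + c * ⟪x, w⟫ / ‖w‖ ^ 2 +
          Real.sqrt (r ^ 2 - c ^ 2 / ‖w‖ ^ 2) *
          Real.sqrt (‖x‖ ^ 2 - ⟪x, w⟫ ^ 2 / ‖w‖ ^ 2)) = ⟪x, θ0⟫ + (a*c + m*s) := by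
      rw [hmeq, haw, ← hsdef]
      field_simp
      ring
    rw [hVeq]
    constructor
    · -- membership of the witness
      refine ⟨θ0 + (c/‖w‖^2) • w + (s/m) • xp, ⟨?_, ?_⟩, ?_⟩
      · show ‖θ0 + (c/‖w‖^2) • w + (s/m) • xp - θ0‖ ≤ r
        have hrw : θ0 + (c/‖w‖^2) • w + (s/m) • xp - θ0 = (c/‖w‖^2) • w + (s/m) • xp := by
          abel
        rw [hrw]
        have hsq : ‖(c/‖w‖^2) • w + (s/m) • xp‖^2 ≤ r^2 := by
          rw [norm_add_sq_real, real_inner_smul_left, real_inner_smul_right, hwxp,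
            norm_smul, norm_smul]
          simp only [Real.norm_eq_abs, mul_zero, mul_pow, ← hmdef]
          rw [sq_abs, sq_abs]
          have h9 : (c/‖w‖^2)^2 * ‖w‖^2 = c^2/‖w‖^2 := by field_simp
          have hcr : c^2/‖w‖^2 ≤ r^2 := by rw [div_le_iff₀ (by positivity)]; linarith
          rcases eq_or_ne m 0 with hm0 | hm0
          · rw [hm0]
            linarith [h9, hcr]
          · have h8 : (s/m)^2 * m^2 = s^2 := by field_simp
            have h10 : s^2 = r^2 - c^2/‖w‖^2 := Real.sq_sqrt hssq
            linarith [h8, h9, h10]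
        have hnn : 0 ≤ ‖(c/‖w‖^2) • w + (s/m) • xp‖ := norm_nonneg _
        nlinarith [hsq, hnn, hr]
      · show ⟪w, θ0 + (c/‖w‖^2) • w + (s/m) • xp⟫ ≤ e
        rw [inner_add_right, inner_add_right, real_inner_smul_right, real_inner_smul_right,
          hwxp, real_inner_self_eq_norm_sq]
        have h11 : c/‖w‖^2 * ‖w‖^2 = c := by field_simp
        rw [h11, mul_zero, add_zero, hcdef]
        ring_nf
        linarith
      · show ⟪x, θ0 + (c/‖w‖^2) • w + (s/m) • xp⟫ = ⟪x, θ0⟫ + (a*c + m*s)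
        rw [inner_add_right, inner_add_right, real_inner_smul_right, real_inner_smul_right,
          hxxp, haw]
        have h11 : c/‖w‖^2 * (a*‖w‖^2) = a*c := by field_simp
        have h12 : s/m * m^2 = m*s := by
          rcases eq_or_ne m 0 with hm0 | hm0
          · rw [hm0]; ring
          · field_simp
        rw [h11, h12]
        ring
    · -- upper bound
      rintro v ⟨θ, ⟨hB, hH⟩, rfl⟩
      simp only [Set.mem_setOf_eq] at hB hH
      set u : EuclideanSpace ℝ (Fin d) := θ - θ0 with hudef
      set p : ℝ := ⟪w, u⟫ with hpdef
      have hθu : θ = θ0 + u := by rw [hudef]; abel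
      have hpc : p ≤ c := by
        have h17 : ⟪w, θ⟫ = ⟪w, θ0⟫ + p := by
          rw [hpdef, ← inner_add_right, ← hθu]
        rw [hcdef]
        linarith [hH, h17]
      set up : EuclideanSpace ℝ (Fin d) := u - (p/‖w‖^2) • w with hupdef
      have hups : u = (p/‖w‖^2) • w + up := by rw [hupdef]; abel
      have hwup : ⟪w, up⟫ = 0 := by
        rw [hupdef, inner_sub_right, real_inner_smul_right, real_inner_self_eq_norm_sq,
          ← hpdef]
        field_simp
        ring
      set n : ℝ := ‖up‖ with hndef
      have hn : 0 ≤ n := norm_nonneg _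
      have huup : ⟪u, up⟫ = n^2 := by
        calc ⟪u, up⟫ = ⟪(p/‖w‖^2) • w + up, up⟫ := by rw [← hups]
          _ = (p/‖w‖^2) * ⟪w, up⟫ + ⟪up, up⟫ := by
              rw [inner_add_left, real_inner_smul_left]
          _ = n^2 := by rw [hwup, real_inner_self_eq_norm_sq]; ring
      have hn2' : n^2 = ‖u‖^2 - p^2/‖w‖^2 := by
        have h := huup
        rw [hupdef, inner_sub_right, real_inner_smul_right, real_inner_comm w u,
          ← hpdef, real_inner_self_eq_norm_sq] at h
        rw [← h]
        field_simp
      have hu2 : ‖u‖^2 ≤ r^2 := by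
        have := pow_le_pow_left₀ (norm_nonneg u) hB 2
        linarith [this]
      have h13 : n^2*‖w‖^2 = ‖u‖^2*‖w‖^2 - p^2 := by
        rw [hn2']
        field_simp
      have h18 : ‖u‖^2*‖w‖^2 ≤ r^2*‖w‖^2 :=
        mul_le_mul_of_nonneg_right hu2 (sq_nonneg ‖w‖)
      have hn2 : p^2 + n^2*‖w‖^2 ≤ r^2*‖w‖^2 := by linarith [h13, h18]
      have hinner : ⟪x, u⟫ ≤ a*p + m*n := by
        have h14 : ⟪x, u⟫ = a*p + ⟪xp, up⟫ := by
          calc ⟪x, u⟫ = ⟪a • w + xp, (p/‖w‖^2) • w + up⟫ := by rw [← hxps, ← hups]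
            _ = a * ⟪w, (p/‖w‖^2) • w + up⟫ + ⟪xp, (p/‖w‖^2) • w + up⟫ := by
                rw [inner_add_left, real_inner_smul_left]
            _ = a * ((p/‖w‖^2) * ‖w‖^2 + ⟪w, up⟫)
                + ((p/‖w‖^2) * ⟪xp, w⟫ + ⟪xp, up⟫) := by
                rw [inner_add_right, inner_add_right, real_inner_smul_right,
                  real_inner_smul_right, real_inner_self_eq_norm_sq]
            _ = a*p + ⟪xp, up⟫ := by
                rw [hwup, real_inner_comm w xp, hwxp]
                field_simp
                ring
        have h15 := real_inner_le_norm xp up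
        rw [h14, ← hmdef, ← hndef] at *
        linarith [h15, mul_le_mul_of_nonneg_left h15 hm]
      have hkey : a*p + m*n ≤ a*c + m*s :=
        dome_key a c m n p s r ‖w‖ ‖x‖ hW hr hm hn (norm_nonneg x) hm2 hs2 hs hn2 hpc hcaseR
      have h16 : ⟪x, θ⟫ = ⟪x, θ0⟫ + ⟪x, u⟫ := by
        rw [← inner_add_right, ← hθu]
      simp only []
      rw [h16]
      linarith [hinner, hkey]
end
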